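/- Let D < 0 be squarefree with D ≡ 1 mod 4, K = ℚ(√D), and I ⊆ O_K a nonzero integral ideal with ℤ-basis (α, β). Then the function q_I(x,y) = N_{K/ℚ}(xα + yβ)/N(I) takes integer values for all x, y ∈ ℤ, and q_I is an integral binary quadratic form of discriminant D in (x,y). -/

import Mathlib

open NumberField

/-- If `d` is squarefree and `d * q ^ 2` is an integer for a rational `q`, then `q` is an
integer. -/
lemma aux_sqfree_rat {d : ℤ} (hd : Squarefree d) {q : ℚ} {m : ℤ}
    (h : (d : ℚ) * q ^ 2 = (m : ℚ)) : ∃ s : ℤ, (s : ℚ) = q := by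
  have hden : (q.den : ℚ) ≠ 0 := by exact_mod_cast q.den_nz
  have hq : (q : ℚ) = (q.num : ℚ) / (q.den : ℚ) := (Rat.num_div_den q).symm
  rw [hq] at h
  have h' : (d : ℚ) * (q.num : ℚ) ^ 2 = (m : ℚ) * (q.den : ℚ) ^ 2 := by
    field_simp at h; linarith [h]
  have hZ : d * q.num ^ 2 = m * (q.den : ℤ) ^ 2 := by exact_mod_cast h'
  have hcop : IsCoprime (q.num : ℤ) (q.den : ℤ) := by
    rw [Int.isCoprime_iff_gcd_eq_one]
    exact_mod_cast q.reduced
  have hdvd : ((q.den : ℤ)) ^ 2 ∣ d * q.num ^ 2 := ⟨m, by linarith [hZ]⟩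
  have hdvd' : ((q.den : ℤ)) ^ 2 ∣ d :=
    (IsCoprime.pow hcop.symm).dvd_of_dvd_mul_right (by rwa [mul_comm] at hdvd)
  have hunit : IsUnit ((q.den : ℤ)) := hd _ (by rwa [← pow_two])
  have hone : ((q.den : ℤ)) = 1 := by
    rcases Int.isUnit_iff.mp hunit with h1 | h1
    · exact h1
    · exfalso; have := q.pos; omega
  have hden1 : (q.den : ℚ) = 1 := by exact_mod_cast hone
  refine ⟨q.num, ?_⟩
  rw [hq, hden1, div_one]; simp

/-- Norm and trace of `u • 1 + v • w` in a rank-2 algebra with basis `(1, w)` where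
`w * w = t • w - n • 1`. -/
lemma aux_norm_trace {R S : Type*} [CommRing R] [CommRing S] [Algebra R S]
    (b : Module.Basis (Fin 2) R S) (hb0 : b 0 = 1) (w : S) (hb1 : b 1 = w)
    (t n : R) (hw : w * w = t • w - n • (1 : S)) (u v : R) :
    Algebra.norm R (u • (1 : S) + v • w) = u ^ 2 + t * u * v + n * v ^ 2 ∧
    Algebra.trace R S (u • (1 : S) + v • w) = 2 * u + t * v := by
  have h1 : (u • (1 : S) + v • w) * b 0 = u • b 0 + v • b 1 := by
    rw [hb0, hb1]; simp [add_mul, smul_mul_assoc]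
  have h2 : (u • (1 : S) + v • w) * b 1 = (-(n * v)) • b 0 + (u + t * v) • b 1 := by
    rw [hb0, hb1, add_mul, smul_mul_assoc, smul_mul_assoc, hw, one_mul]
    module
  have hM : Algebra.leftMulMatrix b (u • (1 : S) + v • w) =
      !![u, -(n * v); v, u + t * v] := by
    ext i j
    rw [Algebra.leftMulMatrix_eq_repr_mul]
    fin_cases i <;> fin_cases j <;>
      simp [h1, h2, map_add, Module.Basis.repr_self]
  constructor
  · rw [Algebra.norm_eq_matrix_det b, hM, Matrix.det_fin_two_of]; ring
  · rw [Algebra.trace_eq_matrix_trace b, hM, Matrix.trace_fin_two_of]; ring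

/-- For `D < 0` squarefree with `D ≡ 1 (mod 4)`, `K = ℚ(√D)`, and a nonzero integral
ideal `I ⊆ O_K` with `ℤ`-basis `(α, β)`, the function
`q_I(x,y) = N_{K/ℚ}(xα + yβ)/N(I)` is an integral binary quadratic form in `(x,y)` of
discriminant `D`. -/
theorem stmt_15 (D : ℤ) (hD : D < 0) (hsq : Squarefree D) (hmod : D % 4 = 1)
    (K : Type) [Field K] [NumberField K] (hdeg : Module.finrank ℚ K = 2)
    (θ : K) (hθ : θ ^ 2 = (D : K))
    (I : Ideal (𝓞 K)) (hI : I ≠ 0) (b : Module.Basis (Fin 2) ℤ I) :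
    ∃ a B c : ℤ,
      (∀ x y : ℤ,
        Algebra.norm ℤ (x • ((b 0 : I) : 𝓞 K) + y • ((b 1 : I) : 𝓞 K)) =
          (Ideal.absNorm I : ℤ) * (a * x ^ 2 + B * x * y + c * y ^ 2)) ∧
      B ^ 2 - 4 * a * c = D := by
  classical
  obtain ⟨c0, hc0⟩ : (4 : ℤ) ∣ 1 - D := by omega
  -- `(1, θ)` is a `ℚ`-basis of `K`
  have hpair : ∀ s t : ℚ, s • (1 : K) + t • θ = 0 → s = 0 ∧ t = 0 := by
    intro s t hst
    by_cases ht : t = 0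
    · subst ht
      simp only [zero_smul, add_zero, smul_eq_zero, one_ne_zero, or_false] at hst
      exact ⟨hst, rfl⟩
    · exfalso
      have h2 : t • θ = (-s) • (1 : K) := by
        rw [neg_smul]
        rw [add_comm] at hst
        exact eq_neg_of_add_eq_zero_left hst
      have h1 : θ = (-(s / t)) • (1 : K) := by
        calc θ = t⁻¹ • (t • θ) := by rw [smul_smul, inv_mul_cancel₀ ht, one_smul]
        _ = (-(s / t)) • (1 : K) := by
            rw [h2, smul_smul]
            congr 1
            field_simp
      have h3 : ((D : ℚ) : K) = (((s / t) ^ 2 : ℚ) : K) := by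
        have hcast : ((D : ℚ) : K) = (D : K) := by push_cast; ring
        rw [hcast, ← hθ, h1, smul_pow, one_pow, neg_sq, Algebra.smul_def, mul_one]
        exact eq_ratCast (algebraMap ℚ K) _
      have h4 : (D : ℚ) = (s / t) ^ 2 := Rat.cast_injective h3
      have h5 : (D : ℚ) < 0 := by exact_mod_cast hD
      nlinarith [sq_nonneg (s / t)]
  have li : LinearIndependent ℚ ![(1 : K), θ] := LinearIndependent.pair_iff.mpr hpair
  have hcard : Fintype.card (Fin 2) = Module.finrank ℚ K := by simp [hdeg]
  let BK : Module.Basis (Fin 2) ℚ K := basisOfLinearIndependentOfCardEqFinrank li hcard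
  have hBK : ⇑BK = ![(1 : K), θ] := coe_basisOfLinearIndependentOfCardEqFinrank li hcard
  have hBK0 : BK 0 = 1 := by rw [hBK]; rfl
  have hBK1 : BK 1 = θ := by rw [hBK]; rfl
  have hθθ : θ * θ = (0 : ℚ) • θ - (-(D : ℚ)) • (1 : K) := by
    rw [Algebra.smul_def, Algebra.smul_def, mul_one, eq_ratCast (algebraMap ℚ K) _,
      eq_ratCast (algebraMap ℚ K) _, ← pow_two, hθ]
    push_cast
    ring
  have hKnt := fun p q : ℚ => aux_norm_trace BK hBK0 θ hBK1 0 (-(D : ℚ)) hθθ p q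
  -- the element ω = (1 + θ)/2 and its integrality
  set ω : K := (1 + θ) / 2 with hωdef
  have hc0K : (1 : K) - (D : K) = 4 * (c0 : K) := by
    exact_mod_cast congrArg (fun z : ℤ => (z : K)) hc0
  have hωω : ω * ω = ω - (c0 : K) := by
    rw [hωdef]
    field_simp
    linear_combination hθ - hc0K
  have hωint : IsIntegral ℤ ω := by
    refine ⟨Polynomial.X ^ 2 - Polynomial.X + Polynomial.C c0, by monicity!, ?_⟩
    simp only [Polynomial.eval₂_add, Polynomial.eval₂_sub, Polynomial.eval₂_pow,
      Polynomial.eval₂_X, Polynomial.eval₂_C]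
    rw [pow_two, hωω, eq_intCast (algebraMap ℤ K) c0]
    ring
  obtain ⟨ωI, hωIcoe⟩ : ∃ w : 𝓞 K, algebraMap (𝓞 K) K w = ω := ⟨⟨ω, hωint⟩, rfl⟩
  have hωIsq : ωI * ωI = (1 : ℤ) • ωI - c0 • (1 : 𝓞 K) := by
    apply NumberField.RingOfIntegers.ext
    simp only [RingOfIntegers.coe_eq_algebraMap, map_mul, map_sub, map_zsmul, map_one]
    rw [hωIcoe, hωω, one_zsmul, zsmul_eq_mul]
    push_cast
    ring
  -- ℤ-linear independence of (1, ωI)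
  have liZ : LinearIndependent ℤ ![(1 : 𝓞 K), ωI] := by
    rw [LinearIndependent.pair_iff]
    intro s t hst
    have hst' : (s : K) + (t : K) * ω = 0 := by
      have h0 := congrArg (algebraMap (𝓞 K) K) hst
      simp only [map_add, map_zsmul, map_one, map_zero] at h0
      rw [hωIcoe, zsmul_eq_mul, zsmul_eq_mul, mul_one] at h0
      exact h0
    have hst2 : ((2 * s + t : ℚ)) • (1 : K) + ((t : ℚ)) • θ = 0 := by
      rw [Algebra.smul_def, Algebra.smul_def, mul_one,
        eq_ratCast (algebraMap ℚ K) _, eq_ratCast (algebraMap ℚ K) _]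
      rw [hωdef] at hst'
      field_simp at hst'
      push_cast
      linear_combination hst'
    obtain ⟨h4, h5⟩ := hpair _ _ hst2
    have ht0 : (t : ℚ) = 0 := h5
    have hs0 : (s : ℚ) = 0 := by push_cast at h4; linarith
    constructor
    · exact_mod_cast hs0
    · exact_mod_cast ht0
  -- spanning
  have spanZ : ⊤ ≤ Submodule.span ℤ (Set.range ![(1 : 𝓞 K), ωI]) := by
    rintro z -
    obtain ⟨p, q, hzK⟩ : ∃ p q : ℚ, algebraMap (𝓞 K) K z = p • (1 : K) + q • θ := by
      refine ⟨BK.repr (algebraMap (𝓞 K) K z) 0, BK.repr (algebraMap (𝓞 K) K z) 1, ?_⟩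
      conv_lhs => rw [← BK.sum_repr (algebraMap (𝓞 K) K z)]
      rw [Fin.sum_univ_two, hBK0, hBK1]
    obtain ⟨t, ht⟩ : ∃ t : ℤ, (t : ℚ) = 2 * p := by
      refine ⟨Algebra.trace ℤ (𝓞 K) z, ?_⟩
      rw [Algebra.coe_trace_int,
        show ((z : K)) = algebraMap (𝓞 K) K z from rfl, hzK, (hKnt p q).2]
      ring
    obtain ⟨nz, hn⟩ : ∃ nz : ℤ, (nz : ℚ) = p ^ 2 - D * q ^ 2 := by
      refine ⟨Algebra.norm ℤ z, ?_⟩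
      rw [Algebra.coe_norm_int,
        show ((z : K)) = algebraMap (𝓞 K) K z from rfl, hzK, (hKnt p q).1]
      ring
    have hDq : (D : ℚ) * (2 * q) ^ 2 = ((t : ℚ)) ^ 2 - 4 * ((nz : ℚ)) := by
      linear_combination (-(t : ℚ) - 2 * p) * ht + 4 * hn
    obtain ⟨s, hs⟩ : ∃ s : ℤ, (s : ℚ) = 2 * q := by
      apply aux_sqfree_rat hsq (m := t ^ 2 - 4 * nz)
      push_cast
      linear_combination hDq
    have h44 : t ^ 2 - D * s ^ 2 = 4 * nz := by
      have hcast : ((t ^ 2 - D * s ^ 2 : ℤ) : ℚ) = ((4 * nz : ℤ) : ℚ) := by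
        push_cast
        linear_combination ((t : ℚ) + 2 * p) * ht - ((D : ℚ) * (2 * q) + (D : ℚ) * s) * hs - 4 * hn
      exact_mod_cast hcast
    have h46 : Even ((t - s) * (t - s)) :=
      ⟨2 * (nz - c0 * s ^ 2) - s * (t - s), by linear_combination h44 - s ^ 2 * hc0⟩
    have h48 : Even (t - s) := by
      rcases Int.even_mul.mp h46 with he | he <;> exact he
    obtain ⟨k, hk⟩ := h48
    have hzeq : z = k • (1 : 𝓞 K) + s • ωI := by
      apply NumberField.RingOfIntegers.ext
      simp only [RingOfIntegers.coe_eq_algebraMap, map_add, map_zsmul, map_one]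
      rw [hωIcoe, hzK, hωdef, zsmul_eq_mul, zsmul_eq_mul, mul_one,
        Algebra.smul_def, Algebra.smul_def, mul_one,
        eq_ratCast (algebraMap ℚ K) _, eq_ratCast (algebraMap ℚ K) _]
      have hpK : 2 * ((p : K)) = ((t : ℤ) : K) := by
        have h9 : ((2 * p : ℚ) : K) = (((t : ℤ) : ℚ) : K) :=
          congrArg (fun z : ℚ => (z : K)) ht.symm
        push_cast at h9
        linear_combination h9
      have hqK : 2 * ((q : K)) = ((s : ℤ) : K) := by
        have h9 : ((2 * q : ℚ) : K) = (((s : ℤ) : ℚ) : K) :=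
          congrArg (fun z : ℚ => (z : K)) hs.symm
        push_cast at h9
        linear_combination h9
      have hkK : ((t : ℤ) : K) - ((s : ℤ) : K) = 2 * ((k : ℤ) : K) := by
        exact_mod_cast congrArg (fun z : ℤ => (z : K)) (show t - s = 2 * k by omega)
      field_simp
      linear_combination θ * hqK + hpK + hkK
    rw [hzeq]
    exact Submodule.add_mem _ (Submodule.smul_mem _ _ (Submodule.subset_span ⟨0, rfl⟩))
      (Submodule.smul_mem _ _ (Submodule.subset_span ⟨1, rfl⟩))
  let B2 : Module.Basis (Fin 2) ℤ (𝓞 K) := Module.Basis.mk liZ spanZ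
  have hB20 : B2 0 = 1 := by simp [B2, Module.Basis.mk_apply]
  have hB21 : B2 1 = ωI := by simp [B2, Module.Basis.mk_apply]
  have hZnt := fun u v : ℤ => (aux_norm_trace B2 hB20 ωI hB21 1 c0 hωIsq u v).1
  set α : 𝓞 K := ((b 0 : I) : 𝓞 K) with hαdef
  set β : 𝓞 K := ((b 1 : I) : 𝓞 K) with hβdef
  set u₁ : ℤ := B2.repr α 0 with hu₁
  set v₁ : ℤ := B2.repr α 1 with hv₁
  set u₂ : ℤ := B2.repr β 0 with hu₂
  set v₂ : ℤ := B2.repr β 1 with hv₂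
  have hα : α = u₁ • (1 : 𝓞 K) + v₁ • ωI := by
    conv_lhs => rw [← B2.sum_repr α]
    rw [Fin.sum_univ_two, hB20, hB21, ← hu₁, ← hv₁]
  have hβ : β = u₂ • (1 : 𝓞 K) + v₂ • ωI := by
    conv_lhs => rw [← B2.sum_repr β]
    rw [Fin.sum_univ_two, hB20, hB21, ← hu₂, ← hv₂]
  have hnorm : ∀ x y : ℤ, Algebra.norm ℤ (x • α + y • β) =
      (x * u₁ + y * u₂) ^ 2 + (x * u₁ + y * u₂) * (x * v₁ + y * v₂)
        + c0 * (x * v₁ + y * v₂) ^ 2 := by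
    intro x y
    have hcomb : x • α + y • β = (x * u₁ + y * u₂) • (1 : 𝓞 K) + (x * v₁ + y * v₂) • ωI := by
      rw [hα, hβ]; module
    rw [hcomb, hZnt]; ring
  set N : ℤ := (Ideal.absNorm I : ℤ) with hNdef
  have hN0 : N ≠ 0 := by
    rw [hNdef]
    simp only [ne_eq, Int.natCast_eq_zero]
    rw [Ideal.absNorm_eq_zero_iff]
    exact hI
  have hdet : ((u₁ * v₂ - v₁ * u₂).natAbs : ℤ) = N := by
    rw [hNdef]
    congr 1
    rw [← Ideal.natAbs_det_basis_change B2 I b]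
    congr 1
    rw [Module.Basis.det_apply, Matrix.det_fin_two]
    simp only [Module.Basis.toMatrix_apply, Function.comp_apply]
    rw [← hαdef, ← hβdef, ← hu₁, ← hv₁, ← hu₂, ← hv₂]
    ring
  have hdvdnorm : ∀ z : 𝓞 K, z ∈ I → N ∣ Algebra.norm ℤ z := by
    intro z hz
    have h1 : Ideal.absNorm I ∣ Ideal.absNorm (Ideal.span {z}) :=
      Ideal.absNorm_dvd_absNorm_of_le ((Ideal.span_singleton_le_iff_mem I).mpr hz)
    rw [Ideal.absNorm_span_singleton] at h1
    exact dvd_trans (Int.natCast_dvd_natCast.mpr h1) (Int.natAbs_dvd.mpr dvd_rfl)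
  have hαI : α ∈ I := (b 0).property
  have hβI : β ∈ I := (b 1).property
  obtain ⟨a, ha⟩ : N ∣ (u₁ ^ 2 + u₁ * v₁ + c0 * v₁ ^ 2) := by
    have h1 := hdvdnorm α hαI
    have h2 := hnorm 1 0
    rw [one_smul, zero_smul, add_zero] at h2
    rw [h2] at h1
    convert h1 using 1
    ring
  obtain ⟨c, hc⟩ : N ∣ (u₂ ^ 2 + u₂ * v₂ + c0 * v₂ ^ 2) := by
    have h1 := hdvdnorm β hβI
    have h2 := hnorm 0 1
    rw [one_smul, zero_smul, zero_add] at h2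
    rw [h2] at h1
    convert h1 using 1
    ring
  obtain ⟨B, hB⟩ : N ∣ (2 * u₁ * u₂ + u₁ * v₂ + u₂ * v₁ + 2 * c0 * v₁ * v₂) := by
    have h1 := hdvdnorm (α + β) (I.add_mem hαI hβI)
    have h2 := hnorm 1 1
    rw [one_smul, one_smul] at h2
    rw [h2] at h1
    have h3 : (2 * u₁ * u₂ + u₁ * v₂ + u₂ * v₁ + 2 * c0 * v₁ * v₂) =
        ((1 * u₁ + 1 * u₂) ^ 2 + (1 * u₁ + 1 * u₂) * (1 * v₁ + 1 * v₂)
          + c0 * (1 * v₁ + 1 * v₂) ^ 2)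
        - (u₁ ^ 2 + u₁ * v₁ + c0 * v₁ ^ 2) - (u₂ ^ 2 + u₂ * v₂ + c0 * v₂ ^ 2) := by ring
    rw [h3]
    exact dvd_sub (dvd_sub h1 ⟨a, ha⟩) ⟨c, hc⟩
  refine ⟨a, B, c, ?_, ?_⟩
  · intro x y
    rw [hnorm x y]
    linear_combination (x ^ 2 : ℤ) * ha + (x * y : ℤ) * hB + (y ^ 2 : ℤ) * hc
  · have he2 : N ^ 2 = (u₁ * v₂ - v₁ * u₂) ^ 2 := by
      rw [← hdet, ← Int.abs_eq_natAbs, sq_abs]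
    have hDc : (1 : ℤ) - 4 * c0 = D := by omega
    have hNN : N ^ 2 ≠ 0 := pow_ne_zero _ hN0
    have key : N ^ 2 * (B ^ 2 - 4 * a * c) = N ^ 2 * D := by
      calc N ^ 2 * (B ^ 2 - 4 * a * c) = (N * B) ^ 2 - 4 * (N * a) * (N * c) := by ring
      _ = (2 * u₁ * u₂ + u₁ * v₂ + u₂ * v₁ + 2 * c0 * v₁ * v₂) ^ 2
            - 4 * (u₁ ^ 2 + u₁ * v₁ + c0 * v₁ ^ 2) * (u₂ ^ 2 + u₂ * v₂ + c0 * v₂ ^ 2) := by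
          rw [← ha, ← hB, ← hc]
      _ = (u₁ * v₂ - v₁ * u₂) ^ 2 * (1 - 4 * c0) := by ring
      _ = N ^ 2 * D := by rw [← he2, hDc]
    exact mul_left_cancel₀ hNN key
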